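/- With the same presentation: if n (the number of kᵢ divisible by the maximal 2-power 2^m among the kᵢ) is even, then h does not lie in the commutator subgroup of Γ̃; specifically, there is a homomorphism φ : Γ̃ → ℂ (unit circle) with φ(h) = −1. -/

import Mathlib

namespace LiftedFuchsian

def q {r : ℕ} (i : Fin r) : FreeGroup (Fin (r + 1)) := FreeGroup.of i.castSucc

def h {r : ℕ} : FreeGroup (Fin (r + 1)) := FreeGroup.of (Fin.last r)

/-- Relations of the lift to SL(2,ℝ) of a genus-zero Fuchsian group of
signature (0; k₁,…,k_r): h central, h² = 1, qᵢ^{kᵢ} = h⁻¹, q₁⋯q_r = h^{-r}. -/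
def rels (r : ℕ) (k : Fin r → ℕ) : Set (FreeGroup (Fin (r + 1))) :=
  (Set.range fun i : Fin r => h * q i * h⁻¹ * (q i)⁻¹) ∪ {h ^ 2} ∪
  (Set.range fun i : Fin r => (q i) ^ (k i) * h) ∪
  {(List.ofFn fun i : Fin r => q i).prod * h ^ r}

/-- maximal power of 2 dividing one of the kᵢ -/
def m (r : ℕ) (k : Fin r → ℕ) : ℕ := Finset.univ.sup fun i => (k i).factorization 2

/-- number of kᵢ divisible by 2^m (set to 0 if all kᵢ are odd) -/
def n (r : ℕ) (k : Fin r → ℕ) : ℕ :=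
  if m r k = 0 then 0
  else (Finset.univ.filter fun i => (k i).factorization 2 = m r k).card

end LiftedFuchsian

private lemma odd_iff_zmod' (z : ℤ) : Odd z ↔ (z : ZMod 2) = 1 := by
  constructor
  · rintro ⟨a, rfl⟩
    push_cast
    have h2 : (2 : ZMod 2) = 0 := rfl
    rw [h2]
    ring
  · intro hz
    rcases Int.even_or_odd z with ⟨a, rfl⟩ | ho
    · exfalso
      rw [show a + a = 2 * a by ring] at hz
      push_cast at hz
      rw [show (2 : ZMod 2) = 0 by rfl] at hz
      simp at hz
    · exact ho

private lemma exists_theta' (r : ℕ) (k : Fin r → ℕ) (hk : ∀ i, 2 ≤ k i)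
    (hn : Even (LiftedFuchsian.n r k)) :
    ∃ θ : Fin r → ℝ, (∑ i, θ i) = r ∧ ∀ i, ∃ w : ℤ, Odd w ∧ (k i : ℝ) * θ i = w := by
  classical
  rcases Nat.eq_zero_or_pos r with hr | hr
  · subst hr
    exact ⟨fun i => 0, by simp, fun i => i.elim0⟩
  have hne : (Finset.univ : Finset (Fin r)).Nonempty := ⟨⟨0, hr⟩, Finset.mem_univ _⟩
  set u : Fin r → ℕ := fun i => (k i).factorization 2 with hu
  set M := LiftedFuchsian.m r k with hM
  obtain ⟨i₀, -, hi₀⟩ := Finset.exists_mem_eq_sup Finset.univ hne u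
  have hMu : M = u i₀ := hi₀
  have hle : ∀ i, u i ≤ M := fun i => Finset.le_sup (Finset.mem_univ i)
  set v : Fin r → ℕ := fun i => k i / 2 ^ u i with hv
  have hkv : ∀ i, k i = 2 ^ u i * v i := fun i =>
    (Nat.ordProj_mul_ordCompl_eq_self (k i) 2).symm
  have hk0 : ∀ i, k i ≠ 0 := fun i => by have := hk i; omega
  have hvodd : ∀ i, Odd (v i) := fun i => by
    have := Nat.not_dvd_ordCompl Nat.prime_two (hk0 i)
    exact Nat.odd_iff.mpr (Nat.two_dvd_ne_zero.mp this)
  set c : Fin r → ℤ := fun i =>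
    if i = i₀ then 2 ^ M * r - ∑ j ∈ Finset.univ.erase i₀, 2 ^ (M - u j)
    else 2 ^ (M - u i) with hc
  have hsum : ∑ i, c i = r * 2 ^ M := by
    rw [← Finset.add_sum_erase _ c (Finset.mem_univ i₀)]
    have heq : ∑ j ∈ Finset.univ.erase i₀, c j
        = ∑ j ∈ Finset.univ.erase i₀, 2 ^ (M - u j) := by
      apply Finset.sum_congr rfl
      intro j hj
      simp only [hc, if_neg (Finset.ne_of_mem_erase hj)]
    rw [heq, hc]
    simp
    ring
  -- parity of c i₀
  have hci₀ : Odd (c i₀) := by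
    rw [odd_iff_zmod']
    have hcast : ((c i₀ : ZMod 2))
        = (2:ZMod 2) ^ M * r - ∑ j ∈ Finset.univ.erase i₀, (2:ZMod 2) ^ (M - u j) := by
      simp only [hc, if_pos rfl]
      push_cast
      ring
    have h2 : (2 : ZMod 2) = 0 := rfl
    rw [hcast, h2]
    have hterm : ∀ j ∈ Finset.univ.erase i₀,
        (0 : ZMod 2) ^ (M - u j) = if u j = M then 1 else 0 := by
      intro j _
      rw [zero_pow_eq]
      congr 1
      simp only [eq_iff_iff]
      constructor
      · intro hz; exact le_antisymm (hle j) (Nat.sub_eq_zero_iff_le.mp hz)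
      · intro hz; omega
    rw [Finset.sum_congr rfl hterm, Finset.sum_boole, Finset.filter_erase]
    rcases Nat.eq_zero_or_pos M with hM0 | hMpos
    · have hall : Finset.univ.filter (fun j => u j = M) = Finset.univ := by
        apply Finset.filter_true_of_mem
        intro j _; have := hle j; omega
      have hcard : ((Finset.univ : Finset (Fin r)).erase i₀).card = r - 1 := by
        rw [Finset.card_erase_of_mem (Finset.mem_univ i₀)]
        simp
      rw [hall, hM0, pow_zero, one_mul, hcard, Nat.cast_sub hr, Nat.cast_one]
      ring
    · have hmem : i₀ ∈ Finset.univ.filter (fun j => u j = M) := by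
        simp [hMu.symm]
      have hN : (Finset.univ.filter (fun j => u j = M)).card = LiftedFuchsian.n r k := by
        rw [LiftedFuchsian.n, if_neg (by omega : LiftedFuchsian.m r k ≠ 0)]
      have hcard : ((Finset.univ.filter (fun j => u j = M)).erase i₀).card
          = LiftedFuchsian.n r k - 1 := by
        rw [Finset.card_erase_of_mem hmem, hN]
      have hn1 : 1 ≤ LiftedFuchsian.n r k := by
        rw [← hN]; exact Finset.card_pos.mpr ⟨i₀, hmem⟩
      have hnz : ((LiftedFuchsian.n r k : ℕ) : ZMod 2) = 0 := by
        rw [ZMod.natCast_eq_zero_iff]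
        exact hn.two_dvd
      rw [hcard, Nat.cast_sub hn1, hnz, zero_pow (by omega : M ≠ 0), Nat.cast_one]
      ring
  have h2M : ((2:ℝ) ^ M) ≠ 0 := by positivity
  refine ⟨fun i => (c i : ℝ) / 2 ^ M, ?_, ?_⟩
  · rw [← Finset.sum_div, div_eq_iff h2M]
    exact_mod_cast hsum
  · intro i
    have key : ∀ w : ℤ, (k i : ℤ) * c i = 2 ^ M * w → (k i : ℝ) * ((c i : ℝ) / 2 ^ M) = w := by
      intro w hw
      have hw' : (k i : ℝ) * c i = 2 ^ M * w := by exact_mod_cast hw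
      field_simp
      linear_combination hw'
    rcases eq_or_ne i i₀ with rfl | hi
    · refine ⟨(v i : ℤ) * c i, ((Int.odd_coe_nat (v i)).mpr (hvodd i)).mul hci₀, key _ ?_⟩
      rw [hkv i]
      push_cast
      rw [← hMu]
      ring
    · refine ⟨(v i : ℤ), (Int.odd_coe_nat (v i)).mpr (hvodd i), key _ ?_⟩
      have e1 : (2:ℤ) ^ (u i) * 2 ^ (M - u i) = 2 ^ M := by
        rw [← pow_add, Nat.add_sub_cancel' (hle i)]
      simp only [hc, if_neg hi]
      rw [hkv i]
      push_cast
      linear_combination (v i : ℤ) * e1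

private lemma circle_exp_pow (t : ℝ) (N : ℕ) : Circle.exp t ^ N = Circle.exp (N * t) := by
  induction N with
  | zero => simp [Circle.exp_zero]
  | succ N ih =>
    rw [pow_succ, ih, ← Circle.exp_add]
    congr 1
    push_cast
    ring

private lemma circle_exp_sum {ι : Type*} (s : Finset ι) (g : ι → ℝ) :
    Circle.exp (∑ i ∈ s, g i) = ∏ i ∈ s, Circle.exp (g i) := by
  classical
  induction s using Finset.cons_induction with
  | empty => simp [Circle.exp_zero]
  | cons a s ha ih => rw [Finset.sum_cons, Finset.prod_cons, Circle.exp_add, ih]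

open LiftedFuchsian in
theorem h_not_in_commutator_of_n_even (r : ℕ) (k : Fin r → ℕ) (hk : ∀ i, 2 ≤ k i)
    (hn : Even (n r k)) :
    (∃ φ : PresentedGroup (rels r k) →* ℂ, φ (PresentedGroup.mk (rels r k) h) = -1) ∧
    PresentedGroup.mk (rels r k) h ∉ commutator (PresentedGroup (rels r k)) := by
  obtain ⟨θ, hθsum, hθ⟩ := exists_theta' r k hk hn
  set f : Fin (r + 1) → Circle := fun x => Circle.exp (Real.pi * Fin.snoc (α := fun _ => ℝ) θ 1 x) with hf
  have hfq : ∀ i : Fin r, FreeGroup.lift f (q i) = Circle.exp (Real.pi * θ i) := by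
    intro i
    simp [q, hf, FreeGroup.lift_apply_of, Fin.snoc_castSucc]
  have hfh : FreeGroup.lift f h = Circle.exp Real.pi := by
    simp [h, hf, FreeGroup.lift_apply_of, Fin.snoc_last]
  have hrel : ∀ g ∈ rels r k, FreeGroup.lift f g = 1 := by
    intro g hg
    rcases hg with ((hg | hg) | hg) | hg
    · obtain ⟨i, rfl⟩ := hg
      simp only [map_mul, map_inv]
      rw [← commutatorElement_def]
      exact commutatorElement_eq_one_iff_commute.mpr (Commute.all _ _)
    · rw [Set.mem_singleton_iff] at hg
      subst hg
      rw [map_pow, hfh, circle_exp_pow, Circle.exp_eq_one]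
      exact ⟨1, by push_cast; ring⟩
    · obtain ⟨i, rfl⟩ := hg
      obtain ⟨w, hw, hwe⟩ := hθ i
      obtain ⟨a, rfl⟩ := hw
      rw [map_mul, map_pow, hfq, hfh, circle_exp_pow, ← Circle.exp_add, Circle.exp_eq_one]
      refine ⟨a + 1, ?_⟩
      push_cast at hwe ⊢
      linear_combination Real.pi * hwe
    · rw [Set.mem_singleton_iff] at hg
      subst hg
      rw [map_mul, map_pow, map_list_prod, List.map_ofFn, hfh, circle_exp_pow]
      rw [List.prod_ofFn]
      simp only [Function.comp_apply]
      rw [Finset.prod_congr rfl (fun i _ => (hfq i : _)), ← circle_exp_sum, ← Circle.exp_add,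
        Circle.exp_eq_one]
      refine ⟨r, ?_⟩
      rw [← Finset.mul_sum]
      linear_combination Real.pi * hθsum
  set ψ : PresentedGroup (rels r k) →* Circle := PresentedGroup.toGroup hrel with hψ
  have hψh : ψ (PresentedGroup.mk (rels r k) h) = Circle.exp Real.pi := by
    have : PresentedGroup.mk (rels r k) h = PresentedGroup.of (rels := rels r k) (Fin.last r) := rfl
    rw [this, hψ, PresentedGroup.toGroup.of]
    simp [hf, Fin.snoc_last]
  have hval : (Circle.coeHom.comp ψ) (PresentedGroup.mk (rels r k) h) = -1 := by
    rw [MonoidHom.comp_apply, hψh]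
    rw [show Circle.coeHom (Circle.exp Real.pi) = ((Circle.exp Real.pi : Circle) : ℂ) from rfl, Circle.coe_exp]
    exact Complex.exp_pi_mul_I
  constructor
  · exact ⟨Circle.coeHom.comp ψ, hval⟩
  · intro hmem
    have h1 : ψ (PresentedGroup.mk (rels r k) h) = 1 :=
      Abelianization.commutator_subset_ker ψ hmem
    rw [MonoidHom.comp_apply, h1] at hval
    simp at hval
    norm_num at hval
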